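/- Let Θ ⊆ ℝ be a nondegenerate open interval, n ∈ ℕ with n ≥ 1, and y₀ < y₁ < ⋯ < yₙ real numbers. Assume y₀, …, y_{n−1} are levels of increase for f : Θ → ℝ and f(Θ) ⊆ [y₀, yₙ]. Then f is strictly ε-increasing with ε := max{y₁ − y₀, …, yₙ − y_{n−1}}, i.e., f(u) < f(v) + ε for all u, v ∈ Θ with u < v. -/

import Mathlib

open Set

theorem stmt7 (Θ : Set ℝ) (hopen : IsOpen Θ) (hconn : Θ.OrdConnected) (hnt : Θ.Nontrivial)
    (n : ℕ) (hn : 1 ≤ n) (y : Fin (n + 1) → ℝ) (hy : StrictMono y)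
    (f : ℝ → ℝ)
    (hlev : ∀ i : Fin n, ∀ u ∈ Θ, ∀ v ∈ Θ, u < v → y i.castSucc ≤ f u → y i.castSucc < f v)
    (hrange : ∀ t ∈ Θ, f t ∈ Set.Icc (y 0) (y (Fin.last n))) :
    ∀ u ∈ Θ, ∀ v ∈ Θ, u < v →
      f u < f v +
        Finset.univ.sup' (Finset.univ_nonempty_iff.mpr ⟨⟨0, hn⟩⟩)
          (fun i : Fin n => y i.succ - y i.castSucc) := by
  intro u hu v hv huv
  set ε := Finset.univ.sup' (Finset.univ_nonempty_iff.mpr ⟨⟨0, hn⟩⟩)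
      (fun i : Fin n => y i.succ - y i.castSucc) with hεdef
  by_cases h : ∃ i : Fin n, y i.castSucc ≤ f u
  · classical
    set S : Finset (Fin n) := Finset.univ.filter (fun i => y i.castSucc ≤ f u) with hS
    have hSne : S.Nonempty := by
      obtain ⟨i, hi⟩ := h
      exact ⟨i, by simp [hS, hi]⟩
    set i := S.max' hSne with hi
    have hiS : i ∈ S := S.max'_mem hSne
    have hile : y i.castSucc ≤ f u := by simpa [hS] using hiS
    have hfv : y i.castSucc < f v := hlev i u hu v hv huv hile
    have hub : f u ≤ y i.succ := by
      by_cases hlast : (i : ℕ) + 1 = n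
      · have : i.succ = Fin.last n := by
          ext; simp [Fin.val_last, hlast]
        rw [this]
        exact (hrange u hu).2
      · have hlt : (i : ℕ) + 1 < n := lt_of_le_of_ne i.isLt hlast
        by_contra hcon
        push_neg at hcon
        set j : Fin n := ⟨(i : ℕ) + 1, hlt⟩ with hj
        have hjcs : j.castSucc = i.succ := by ext; simp [hj]
        have hjS : j ∈ S := by
          simp only [hS, Finset.mem_filter, Finset.mem_univ, true_and]
          rw [hjcs]; exact le_of_lt hcon
        have hle := S.le_max' j hjS
        have h2 : (i : ℕ) + 1 ≤ (i : ℕ) := by exact hle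
        omega
    have hgap : y i.succ - y i.castSucc ≤ ε := Finset.le_sup' (fun i : Fin n => y i.succ - y i.castSucc) (Finset.mem_univ i)
    linarith
  · push_neg at h
    have h0 : f u < y (⟨0, hn⟩ : Fin n).castSucc := h ⟨0, hn⟩
    have h0' : (⟨0, hn⟩ : Fin n).castSucc = (0 : Fin (n+1)) := by ext; simp
    rw [h0'] at h0
    have hfv : y 0 ≤ f v := (hrange v hv).1
    have hεpos : 0 < ε := by
      have : y (⟨0, hn⟩ : Fin n).succ - y (⟨0, hn⟩ : Fin n).castSucc ≤ ε :=
        Finset.le_sup' (fun i : Fin n => y i.succ - y i.castSucc) (Finset.mem_univ _)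
      have hlt : y (⟨0, hn⟩ : Fin n).castSucc < y (⟨0, hn⟩ : Fin n).succ :=
        hy Fin.castSucc_lt_succ
      linarith
    linarith
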